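/- Let A = (a_x)_{x∈X} be a finite-outcome POVM on a finite-dimensional complex Hilbert space H. Then A is intersubjective (i.e., every POVM B = (b_{x,x'}) on X×X with both marginals equal to A satisfies ∑_x b_{x,x} = 1) if and only if for all x ≠ x' in X, range(a_x) ∩ range(a_{x'}) = {0}. -/

import Mathlib

open scoped ComplexOrder
open Finset
open Matrix

namespace PovmAux

variable {n : ℕ}

lemma dot_herm_zero {M : Matrix (Fin n) (Fin n) ℂ} (hM : M.IsHermitian)
    {k : Fin n → ℂ} (hk : M *ᵥ k = 0) (u : Fin n → ℂ) :
    star k ⬝ᵥ (M *ᵥ u) = 0 := by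
  rw [Matrix.dotProduct_mulVec]
  have h : star k ᵥ* M = 0 := by
    have h2 := Matrix.star_mulVec M k
    rw [hk, hM.eq] at h2
    simpa using h2.symm
  rw [h, zero_dotProduct]

lemma ker_mono {A B : Matrix (Fin n) (Fin n) ℂ} (hB : B.PosSemidef)
    (hAB : (A - B).PosSemidef) {v : Fin n → ℂ} (hv : A *ᵥ v = 0) : B *ᵥ v = 0 := by
  have h1 : 0 ≤ star v ⬝ᵥ B *ᵥ v := hB.dotProduct_mulVec_nonneg v
  have h2 : 0 ≤ star v ⬝ᵥ (A - B) *ᵥ v := hAB.dotProduct_mulVec_nonneg v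
  rw [Matrix.sub_mulVec, dotProduct_sub, hv, dotProduct_zero, zero_sub] at h2
  have h3 : star v ⬝ᵥ B *ᵥ v = 0 := le_antisymm (neg_nonneg.mp h2) h1
  exact (hB.dotProduct_mulVec_zero_iff v).mp h3


lemma herm_compl {A : Matrix (Fin n) (Fin n) ℂ} (hA : A.IsHermitian) :
    LinearMap.range A.mulVecLin ⊔ LinearMap.ker A.mulVecLin = ⊤ := by
  apply Submodule.eq_top_of_disjoint
  · rw [LinearMap.finrank_range_add_finrank_ker]
  · rw [Submodule.disjoint_def]
    rintro v ⟨u, rfl⟩ hk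
    rw [LinearMap.mem_ker, Matrix.mulVecLin_apply] at hk
    rw [Matrix.mulVecLin_apply] at *
    have h : star (A *ᵥ u) ⬝ᵥ (A *ᵥ u) = 0 := by
      rw [Matrix.star_mulVec, hA.eq, ← Matrix.dotProduct_mulVec, hk, dotProduct_zero]
    exact dotProduct_star_self_eq_zero.mp h

lemma range_mono {A B : Matrix (Fin n) (Fin n) ℂ} (hB : B.PosSemidef)
    (hA : A.IsHermitian) (hAB : (A - B).PosSemidef) :
    LinearMap.range B.mulVecLin ≤ LinearMap.range A.mulVecLin := by
  rintro w ⟨u, rfl⟩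
  have hw : B.mulVecLin u ∈ LinearMap.range A.mulVecLin ⊔ LinearMap.ker A.mulVecLin := by
    rw [herm_compl hA]; trivial
  rw [Submodule.mem_sup] at hw
  obtain ⟨a, ha, k, hk, hak⟩ := hw
  rw [LinearMap.mem_ker, Matrix.mulVecLin_apply] at hk
  have hkB : B *ᵥ k = 0 := ker_mono hB hAB hk
  have h1 : star k ⬝ᵥ (B *ᵥ u) = 0 := dot_herm_zero hB.1 hkB u
  obtain ⟨m, hm⟩ := ha
  have h2 : star k ⬝ᵥ a = 0 := by
    rw [← hm, Matrix.mulVecLin_apply]; exact dot_herm_zero hA hk m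
  have h3 : star k ⬝ᵥ k = 0 := by
    have h4 := congrArg (fun z => star k ⬝ᵥ z) hak
    simp only [Matrix.mulVecLin_apply, dotProduct_add, h1, h2, zero_add] at h4
    exact h4
  have hk0 : k = 0 := dotProduct_star_self_eq_zero.mp h3
  rw [hk0, add_zero] at hak
  rw [← hak]; exact ⟨m, hm⟩


lemma dot_vecMulVec (v u : Fin n → ℂ) :
    star u ⬝ᵥ (Matrix.vecMulVec v (star v) *ᵥ u) = (star u ⬝ᵥ v) * (star v ⬝ᵥ u) := by
  simp only [dotProduct, Matrix.mulVec, Matrix.vecMulVec_apply, Pi.star_apply,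
    Finset.mul_sum, Finset.sum_mul]
  rw [Finset.sum_comm]
  apply Finset.sum_congr rfl; intro j _
  apply Finset.sum_congr rfl; intro i _
  ring

lemma star_dot_comm (v u : Fin n → ℂ) : star u ⬝ᵥ v = star (star v ⬝ᵥ u) := by
  simp only [dotProduct, star_sum, star_mul', Pi.star_apply, star_star]
  apply Finset.sum_congr rfl; intro i _; ring

lemma cs {A : Matrix (Fin n) (Fin n) ℂ} (hA : A.PosSemidef) (w u : Fin n → ℂ) :
    ‖star (A *ᵥ w) ⬝ᵥ u‖ ^ 2 ≤ (star w ⬝ᵥ A *ᵥ w).re * (star u ⬝ᵥ A *ᵥ u).re := by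
  obtain ⟨S, rfl⟩ : ∃ S : Matrix (Fin n) (Fin n) ℂ, A = Sᴴ * S := by
    open scoped MatrixOrder Matrix.Norms.L2Operator in
    exact CStarAlgebra.nonneg_iff_eq_star_mul_self.mp hA.nonneg
  have form : ∀ a : Fin n → ℂ, star a ⬝ᵥ ((Sᴴ * S) *ᵥ a) = star (S *ᵥ a) ⬝ᵥ (S *ᵥ a) := by
    intro a
    rw [← Matrix.mulVec_mulVec, Matrix.dotProduct_mulVec, ← Matrix.star_mulVec]
  have key : star ((Sᴴ * S) *ᵥ w) ⬝ᵥ u = star (S *ᵥ w) ⬝ᵥ (S *ᵥ u) := by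
    rw [← Matrix.mulVec_mulVec, Matrix.star_mulVec, Matrix.conjTranspose_conjTranspose,
      ← Matrix.dotProduct_mulVec]
  rw [key, form, form]
  set p : EuclideanSpace ℂ (Fin n) := (WithLp.equiv 2 _).symm (S *ᵥ w) with hp
  set q : EuclideanSpace ℂ (Fin n) := (WithLp.equiv 2 _).symm (S *ᵥ u) with hq
  have h1 := inner_mul_inner_self_le (𝕜 := ℂ) p q
  have hpq : inner (𝕜 := ℂ) p q = star (S *ᵥ w) ⬝ᵥ (S *ᵥ u) :=
    (EuclideanSpace.inner_toLp_toLp _ _).trans (dotProduct_comm _ _)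
  have hqp : inner (𝕜 := ℂ) q p = star (S *ᵥ u) ⬝ᵥ (S *ᵥ w) :=
    (EuclideanSpace.inner_toLp_toLp _ _).trans (dotProduct_comm _ _)
  have hpp : inner (𝕜 := ℂ) p p = star (S *ᵥ w) ⬝ᵥ (S *ᵥ w) :=
    (EuclideanSpace.inner_toLp_toLp _ _).trans (dotProduct_comm _ _)
  have hqq : inner (𝕜 := ℂ) q q = star (S *ᵥ u) ⬝ᵥ (S *ᵥ u) :=
    (EuclideanSpace.inner_toLp_toLp _ _).trans (dotProduct_comm _ _)
  rw [hpq, hqp, hpp, hqq] at h1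
  have hnorm : ‖star (S *ᵥ u) ⬝ᵥ (S *ᵥ w)‖ = ‖star (S *ᵥ w) ⬝ᵥ (S *ᵥ u)‖ := by
    rw [star_dot_comm]
    exact norm_star _
  rw [hnorm] at h1
  calc ‖star (S *ᵥ w) ⬝ᵥ (S *ᵥ u)‖ ^ 2
      = ‖star (S *ᵥ w) ⬝ᵥ (S *ᵥ u)‖ * ‖star (S *ᵥ w) ⬝ᵥ (S *ᵥ u)‖ := sq _
    _ ≤ _ := by simpa using h1


lemma vecMulVec_herm (v : Fin n → ℂ) (ε : ℝ) :
    ((ε : ℂ) • Matrix.vecMulVec v (star v)).IsHermitian := by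
  ext i j
  simp [Matrix.conjTranspose_apply, Matrix.vecMulVec_apply, Matrix.smul_apply, mul_comm,
    Complex.conj_ofReal]

lemma vecMulVec_psd (v : Fin n → ℂ) {ε : ℝ} (hε : 0 ≤ ε) :
    ((ε : ℂ) • Matrix.vecMulVec v (star v)).PosSemidef := by
  refine .of_dotProduct_mulVec_nonneg (vecMulVec_herm v ε) fun u => ?_
  rw [Matrix.smul_mulVec, dotProduct_smul, dot_vecMulVec, star_dot_comm, smul_eq_mul]
  set t := star v ⬝ᵥ u
  have h1 : (0:ℂ) ≤ star t * t := star_mul_self_nonneg t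
  have h2 : (0:ℂ) ≤ (ε:ℂ) := by exact_mod_cast Complex.zero_le_real.mpr hε
  exact mul_nonneg h2 h1

lemma sub_vecMulVec_psd {A : Matrix (Fin n) (Fin n) ℂ} (hA : A.PosSemidef)
    (w : Fin n → ℂ) {ε : ℝ} (hε : 0 ≤ ε)
    (hc : ε * (star w ⬝ᵥ A *ᵥ w).re ≤ 1) :
    (A - (ε : ℂ) • Matrix.vecMulVec (A *ᵥ w) (star (A *ᵥ w))).PosSemidef := by
  set v := A *ᵥ w with hv
  refine .of_dotProduct_mulVec_nonneg (hA.1.sub (vecMulVec_herm v ε)) fun u => ?_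
  rw [Matrix.sub_mulVec, dotProduct_sub, Matrix.smul_mulVec,
    dotProduct_smul, dot_vecMulVec, star_dot_comm v u, smul_eq_mul]
  set t := star v ⬝ᵥ u with ht
  set q := star u ⬝ᵥ A *ᵥ u with hq
  have hqnn : 0 ≤ q := hA.dotProduct_mulVec_nonneg u
  have hqim : q.im = 0 := by
    have := (Complex.le_def.mp hqnn).2; simpa using this.symm
  have hqre : 0 ≤ q.re := by
    have := (Complex.le_def.mp hqnn).1; simpa using this
  have hcs : ‖t‖ ^ 2 ≤ (star w ⬝ᵥ A *ᵥ w).re * q.re := cs hA w u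
  have htt : star t * t = ((‖t‖ ^ 2 : ℝ) : ℂ) := by
    rw [RCLike.star_def, RCLike.conj_mul]
    norm_cast
  rw [htt, Complex.le_def]
  constructor
  · simp only [Complex.zero_re, Complex.sub_re, Complex.mul_re, Complex.ofReal_re,
      Complex.ofReal_im, Complex.mul_im, mul_zero, zero_mul, sub_zero]
    have hwnn : 0 ≤ (star w ⬝ᵥ A *ᵥ w).re := by
      have := (Complex.le_def.mp (hA.dotProduct_mulVec_nonneg w)).1; simpa using this
    nlinarith [sq_nonneg ‖t‖]
  · simp only [Complex.sub_im, Complex.zero_im, hqim, Complex.mul_im, Complex.ofReal_re,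
      Complex.ofReal_im, mul_zero, zero_mul, add_zero, zero_sub, neg_eq_zero]
    simp

end PovmAux

/-- A finite-outcome POVM: positive semidefinite operators summing to the identity. -/
def IsPOVM {X : Type*} [Fintype X] {n : ℕ} (A : X → Matrix (Fin n) (Fin n) ℂ) : Prop :=
  (∀ x, (A x).PosSemidef) ∧ ∑ x, A x = 1

/-- a POVM `A` is intersubjective (every joint POVM of `A` with itself has
diagonal summing to `1`) iff the ranges of distinct elements intersect trivially. -/
theorem povm_intersubjective_iff_supports {n : ℕ} {X : Type*} [Fintype X]
    (A : X → Matrix (Fin n) (Fin n) ℂ) (hA : IsPOVM A) :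
    (∀ B : X × X → Matrix (Fin n) (Fin n) ℂ, IsPOVM B →
        (∀ x, ∑ x', B (x, x') = A x) → (∀ x', ∑ x, B (x, x') = A x') →
        ∑ x, B (x, x) = 1) ↔
      (∀ x x', x ≠ x' →
        LinearMap.range (A x).mulVecLin ⊓ LinearMap.range (A x').mulVecLin = ⊥) := by
  classical
  obtain ⟨hApsd, hAsum⟩ := hA
  constructor
  · intro hint x x' hxx'
    by_contra hbot
    obtain ⟨v, hv_mem, hv0⟩ := (Submodule.ne_bot_iff _).mp hbot
    obtain ⟨w, hw⟩ := (Submodule.mem_inf.mp hv_mem).1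
    obtain ⟨w', hw'⟩ := (Submodule.mem_inf.mp hv_mem).2
    rw [Matrix.mulVecLin_apply] at hw hw'
    set cx := (star w ⬝ᵥ A x *ᵥ w).re with hcx
    set cx' := (star w' ⬝ᵥ A x' *ᵥ w').re with hcx'
    have hcxnn : 0 ≤ cx := by
      have := (Complex.le_def.mp ((hApsd x).dotProduct_mulVec_nonneg w)).1; simpa using this
    have hcx'nn : 0 ≤ cx' := by
      have := (Complex.le_def.mp ((hApsd x').dotProduct_mulVec_nonneg w')).1; simpa using this
    set ε : ℝ := (1 + cx + cx')⁻¹ with hεdef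
    have hden : (0:ℝ) < 1 + cx + cx' := by linarith
    have hεpos : 0 < ε := inv_pos.mpr hden
    have hεx : ε * cx ≤ 1 := by
      calc ε * cx ≤ ε * (1 + cx + cx') := by
            apply mul_le_mul_of_nonneg_left (by linarith) hεpos.le
        _ = 1 := inv_mul_cancel₀ (ne_of_gt hden)
    have hεx' : ε * cx' ≤ 1 := by
      calc ε * cx' ≤ ε * (1 + cx + cx') := by
            apply mul_le_mul_of_nonneg_left (by linarith) hεpos.le
        _ = 1 := inv_mul_cancel₀ (ne_of_gt hden)
    set C := (ε : ℂ) • Matrix.vecMulVec v (star v) with hCdef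
    have hCpsd : C.PosSemidef := PovmAux.vecMulVec_psd v hεpos.le
    have hCx : (A x - C).PosSemidef := by
      have h := PovmAux.sub_vecMulVec_psd (hApsd x) w hεpos.le hεx
      rw [hw] at h; exact h
    have hCx' : (A x' - C).PosSemidef := by
      have h := PovmAux.sub_vecMulVec_psd (hApsd x') w' hεpos.le hεx'
      rw [hw'] at h; exact h
    have hCne : C ≠ 0 := by
      intro h0
      obtain ⟨i, hi⟩ := Function.ne_iff.mp hv0
      have h := congrFun (congrFun (hCdef.symm.trans h0) i) i
      simp only [Matrix.smul_apply, Matrix.vecMulVec_apply, Pi.star_apply,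
        Matrix.zero_apply, smul_eq_mul, mul_eq_zero, Complex.ofReal_eq_zero] at h
      rcases h with h | h
      · exact hεpos.ne' h
      · rcases h with h | h
        · exact hi h
        · exact hi (star_eq_zero.mp h)
    set B : X × X → Matrix (Fin n) (Fin n) ℂ := fun p =>
      (if p.1 = p.2 then A p.1 else 0)
        + ((if p = (x, x') then C else 0) + (if p = (x', x) then C else 0))
        - ((if p = (x, x) then C else 0) + (if p = (x', x') then C else 0)) with hBdef
    have hxx'2 : x' ≠ x := Ne.symm hxx'
    have hrow : ∀ y, ∑ y', B (y, y') = A y := by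
      intro y
      by_cases h1 : y = x
      · subst h1
        simp only [hBdef, Prod.mk.injEq, hxx', hxx'2, false_and, and_false, if_false,
          ite_and, true_and, and_true, eq_self_iff_true, if_true]
        rw [Finset.sum_sub_distrib, Finset.sum_add_distrib]
        simp [Finset.sum_ite_eq, Finset.sum_ite_eq']
      · by_cases h2 : y = x'
        · subst h2
          simp only [hBdef, Prod.mk.injEq, hxx', hxx'2, false_and, and_false, if_false,
            ite_and, true_and, and_true, eq_self_iff_true, if_true]
          rw [Finset.sum_sub_distrib, Finset.sum_add_distrib]
          simp [Finset.sum_ite_eq, Finset.sum_ite_eq']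
        · simp only [hBdef, Prod.mk.injEq, h1, h2, false_and, if_false, ite_and]
          rw [Finset.sum_sub_distrib, Finset.sum_add_distrib]
          simp [Finset.sum_ite_eq, Finset.sum_ite_eq']
    have hcol : ∀ y', ∑ y, B (y, y') = A y' := by
      intro y'
      by_cases h1 : y' = x
      · subst h1
        simp only [hBdef, Prod.mk.injEq, hxx', hxx'2, false_and, and_false, if_false,
          ite_and, true_and, and_true, eq_self_iff_true, if_true]
        rw [Finset.sum_sub_distrib, Finset.sum_add_distrib]
        simp [Finset.sum_ite_eq, Finset.sum_ite_eq']
      · by_cases h2 : y' = x'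
        · subst h2
          simp only [hBdef, Prod.mk.injEq, hxx', hxx'2, false_and, and_false, if_false,
            ite_and, true_and, and_true, eq_self_iff_true, if_true]
          rw [Finset.sum_sub_distrib, Finset.sum_add_distrib]
          simp [Finset.sum_ite_eq, Finset.sum_ite_eq']
        · simp only [hBdef, Prod.mk.injEq, h1, h2, and_false, if_false, ite_and]
          rw [Finset.sum_sub_distrib, Finset.sum_add_distrib]
          simp [Finset.sum_ite_eq, Finset.sum_ite_eq']
    have hpsd : ∀ p, (B p).PosSemidef := by
      rintro ⟨y, y'⟩
      have hBp : B (y, y') =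
          (if y = y' then A y else 0)
            + ((if y = x ∧ y' = x' then C else 0) + (if y = x' ∧ y' = x then C else 0))
            - ((if y = x ∧ y' = x then C else 0) + (if y = x' ∧ y' = x' then C else 0)) := by
        simp only [hBdef, Prod.mk.injEq]
      rw [hBp]
      rcases eq_or_ne y x with h1 | h1
      · rcases eq_or_ne y' x with h2 | h2
        · simpa [h1, h2, hxx', hxx'2] using hCx
        · rcases eq_or_ne y' x' with h4 | h4
          · simpa [h1, h4, hxx', hxx'2] using hCpsd
          · simpa [h1, h2, h4, hxx', hxx'2, Ne.symm h2] using Matrix.PosSemidef.zero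
      · rcases eq_or_ne y x' with h3 | h3
        · rcases eq_or_ne y' x with h2 | h2
          · simpa [h3, h2, hxx', hxx'2] using hCpsd
          · rcases eq_or_ne y' x' with h4 | h4
            · simpa [h3, h4, h2, hxx', hxx'2] using hCx'
            · simpa [h3, h2, h4, hxx', hxx'2, Ne.symm h4] using Matrix.PosSemidef.zero
        · rcases eq_or_ne y y' with rfl | h5
          · simpa [h1, h3] using hApsd y
          · simpa [h1, h3, h5] using Matrix.PosSemidef.zero
    have hsum : ∑ p, B p = 1 := by
      rw [Fintype.sum_prod_type]
      simp only [hrow]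
      exact hAsum
    have h1 := hint B ⟨hpsd, hsum⟩ hrow hcol
    have hdiag : ∑ y, B (y, y) = 1 - (C + C) := by
      have hzero1 : ∀ y : X, (if y = x then if y = x' then C else 0 else 0) = 0 := by
        intro y
        rcases eq_or_ne y x with rfl | hy
        · simp [hxx']
        · simp [hy]
      have hzero2 : ∀ y : X, (if y = x' then if y = x then C else 0 else 0) = 0 := by
        intro y
        rcases eq_or_ne y x' with rfl | hy
        · simp [hxx'2]
        · simp [hy]
      have hByy : ∀ y : X, B (y, y) =
          A y - ((if y = x then C else 0) + (if y = x' then C else 0)) := by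
        intro y
        simp only [hBdef, Prod.mk.injEq, ite_and, and_self, eq_self_iff_true, if_true]
        rw [hzero1 y, hzero2 y]
        simp
      calc ∑ y, B (y, y)
          = ∑ y, (A y - ((if y = x then C else 0) + (if y = x' then C else 0))) :=
            Finset.sum_congr rfl (fun y _ => hByy y)
        _ = 1 - (C + C) := by
            rw [Finset.sum_sub_distrib, hAsum, Finset.sum_add_distrib]
            simp [Finset.sum_ite_eq']
    rw [h1] at hdiag
    have hCC : C + C = 0 := by
      have h2 : (1 : Matrix (Fin n) (Fin n) ℂ) - (C + C) = 1 := hdiag.symm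
      have h3 := sub_eq_self.mp h2
      exact h3
    apply hCne
    ext i j
    have h := congrFun (congrFun hCC i) j
    simp only [Matrix.add_apply, Matrix.zero_apply] at h ⊢
    exact add_self_eq_zero.mp h
  · intro hr B hB hm1 hm2
    have hoff : ∀ y y', y ≠ y' → B (y, y') = 0 := by
      intro y y' hyy'
      have hb := hB.1 (y, y')
      have hAyb : (A y - B (y, y')).PosSemidef := by
        have hsplit : B (y, y') + ∑ z ∈ univ.erase y', B (y, z) = A y :=
          (Finset.add_sum_erase univ (fun z => B (y, z)) (Finset.mem_univ y')).trans (hm1 y)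
        have he : A y - B (y, y') = ∑ z ∈ univ.erase y', B (y, z) := by
          rw [← hsplit]; simp
        rw [he]
        exact Finset.sum_induction _ _ (fun a b ha hb => ha.add hb)
          Matrix.PosSemidef.zero (fun z _ => hB.1 (y, z))
      have hAy'b : (A y' - B (y, y')).PosSemidef := by
        have hsplit : B (y, y') + ∑ z ∈ univ.erase y, B (z, y') = A y' :=
          (Finset.add_sum_erase univ (fun z => B (z, y')) (Finset.mem_univ y)).trans (hm2 y')
        have he : A y' - B (y, y') = ∑ z ∈ univ.erase y, B (z, y') := by
          rw [← hsplit]; simp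
        rw [he]
        exact Finset.sum_induction _ _ (fun a b ha hb => ha.add hb)
          Matrix.PosSemidef.zero (fun z _ => hB.1 (z, y'))
      have hle : LinearMap.range (B (y, y')).mulVecLin ≤ ⊥ := by
        rw [← hr y y' hyy']
        exact le_inf (PovmAux.range_mono hb (hApsd y).1 hAyb)
          (PovmAux.range_mono hb (hApsd y').1 hAy'b)
      have h2 : (B (y, y')).mulVecLin = 0 := LinearMap.range_eq_bot.mp (le_bot_iff.mp hle)
      ext i j
      have h3 := congrFun (LinearMap.congr_fun h2 (Pi.single j 1)) i
      simpa using h3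
    have hdiag : ∀ y, B (y, y) = A y := by
      intro y
      have h := Finset.sum_eq_single_of_mem y (Finset.mem_univ y)
        (fun b _ hb => hoff y b (fun hh => hb hh.symm))
      rw [← hm1 y]
      exact h.symm
    calc ∑ y, B (y, y) = ∑ y, A y := Finset.sum_congr rfl (fun y _ => hdiag y)
      _ = 1 := hAsum
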